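/- Let M = [[A, B],[0, C]] be an m×m nonnegative real matrix in block upper-triangular form, where A is a d×d primitive nonnegative matrix (1 ≤ d < m) with Perron–Frobenius eigenvalue λ and strictly positive right eigenvector ω_R normalized so that the sum of its entries is 1. Suppose the spectral radius of C is strictly less than λ, and that the upper-right d×(m−d) block of Mⁿ is strictly positive for all sufficiently large n. Then (ω_R, 0) ∈ ℝ^m is, up to positive scalar multiple, the unique eigenvector of M all of whose entries are nonnegative, and for every nonnegative nonzero vector w ∈ ℝ^m, Mⁿw / |Mⁿw|₁ → (ω_R, 0) as n → ∞, where |·|₁ denotes the sum of absolute values of entries. -/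

import Mathlib

/- Statement 3: Perron–Frobenius-type conclusion for a nonnegative block upper-triangular
matrix M = [[A,B],[0,C]] with A primitive with PF eigenvalue λ and normalized positive
right eigenvector ω_R, spectral radius of C < λ, and eventually strictly positive
upper-right block: (ω_R, 0) is (up to positive scalar) the unique nonnegative eigenvector
of M, and the ℓ¹-normalized iterates Mⁿw converge to (ω_R, 0) for every nonnegative
nonzero w. -/

open Matrix Filter

lemma PF_perturbed (d : ℕ) (hd : 0 < d) (A : Matrix (Fin d) (Fin d) ℝ)
    (hA : ∀ i j, 0 ≤ A i j) (lam : ℝ) (hlam : 0 < lam)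
    (ω : Fin d → ℝ) (hω : ∀ i, 0 < ω i) (heig : A *ᵥ ω = lam • ω)
    (k : ℕ) (hAk : ∀ i j, 0 < (A ^ k) i j)
    (z ε : ℕ → Fin d → ℝ) (hε : ∀ n i, 0 ≤ ε n i)
    (hrec : ∀ n, z (n + 1) = lam⁻¹ • (A *ᵥ z n) + ε n)
    (hδ : Summable fun n => ⨆ i, ε n i / ω i) :
    ∃ α : ℝ, (⨅ i, z 0 i / ω i) ≤ α ∧ Tendsto z atTop (nhds (α • ω)) := by
  haveI : Nonempty (Fin d) := ⟨⟨0, hd⟩⟩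
  set T : (Fin d → ℝ) → (Fin d → ℝ) := fun v => lam⁻¹ • (A *ᵥ v) with hT
  set mr : (Fin d → ℝ) → ℝ := fun v => ⨅ i, v i / ω i with hmr
  set Mr : (Fin d → ℝ) → ℝ := fun v => ⨆ i, v i / ω i with hMr
  have hmv : ∀ (B : Matrix (Fin d) (Fin d) ℝ) (v : Fin d → ℝ) i,
      (B *ᵥ v) i = ∑ j, B i j * v j := fun B v i => rfl
  have heig' : ∀ i, (A *ᵥ ω) i = lam * ω i := fun i => by rw [heig]; simp
  -- F1
  have F1a : ∀ v i, mr v * ω i ≤ v i := by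
    intro v i
    have h : mr v ≤ v i / ω i := ciInf_le (Set.Finite.bddBelow (Set.finite_range _)) i
    calc mr v * ω i ≤ (v i / ω i) * ω i := mul_le_mul_of_nonneg_right h (hω i).le
      _ = v i := div_mul_cancel₀ _ (hω i).ne'
  have F1b : ∀ v i, v i ≤ Mr v * ω i := by
    intro v i
    have h : v i / ω i ≤ Mr v := le_ciSup (f := fun i => v i / ω i) (Set.Finite.bddAbove (Set.finite_range _)) i
    calc v i = (v i / ω i) * ω i := (div_mul_cancel₀ _ (hω i).ne').symm
      _ ≤ Mr v * ω i := mul_le_mul_of_nonneg_right h (hω i).le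
  have F2 : ∀ v, mr v ≤ Mr v := by
    intro v
    obtain ⟨i⟩ := (inferInstance : Nonempty (Fin d))
    exact le_trans (ciInf_le (Set.Finite.bddBelow (Set.finite_range _)) i)
      (le_ciSup (f := fun i => v i / ω i) (Set.Finite.bddAbove (Set.finite_range _)) i)
  have F3m : ∀ v w, (∀ i, v i ≤ w i) → mr v ≤ mr w := by
    intro v w h
    refine le_ciInf fun i => le_trans (ciInf_le (Set.Finite.bddBelow (Set.finite_range _)) i) ?_
    exact div_le_div_of_nonneg_right (h i) (hω i).le
  have F3M : ∀ v w, (∀ i, v i ≤ w i) → Mr v ≤ Mr w := by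
    intro v w h
    refine ciSup_le fun i => le_trans ?_ (le_ciSup (Set.Finite.bddAbove (Set.finite_range _)) i)
    exact div_le_div_of_nonneg_right (h i) (hω i).le
  -- subadditivity of Mr
  have F4 : ∀ v w, Mr (v + w) ≤ Mr v + Mr w := by
    intro v w
    refine ciSup_le fun i => ?_
    have : (v + w) i / ω i = v i / ω i + w i / ω i := by
      simp [add_div]
    rw [this]
    exact add_le_add (le_ciSup (f := fun i => v i / ω i) (Set.Finite.bddAbove (Set.finite_range _)) i)
      (le_ciSup (f := fun i => w i / ω i) (Set.Finite.bddAbove (Set.finite_range _)) i)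
  have F5 : ∀ v w, (∀ i, 0 ≤ w i) → mr v ≤ mr (v + w) :=
    fun v w h => F3m _ _ fun i => le_add_of_nonneg_right (h i)
  -- T bounds
  have T1M : ∀ v, Mr (T v) ≤ Mr v := by
    intro v
    refine ciSup_le fun i => ?_
    rw [div_le_iff₀ (hω i)]
    have h1 : (A *ᵥ v) i ≤ Mr v * (lam * ω i) := by
      rw [hmv, ← heig' i, hmv]
      rw [Finset.mul_sum]
      refine Finset.sum_le_sum fun j _ => ?_
      have := F1b v j
      calc A i j * v j ≤ A i j * (Mr v * ω j) := mul_le_mul_of_nonneg_left (F1b v j) (hA i j)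
        _ = Mr v * (A i j * ω j) := by ring
    have : T v i = lam⁻¹ * (A *ᵥ v) i := rfl
    rw [this]
    calc lam⁻¹ * (A *ᵥ v) i ≤ lam⁻¹ * (Mr v * (lam * ω i)) := by
          exact mul_le_mul_of_nonneg_left h1 (inv_nonneg.mpr hlam.le)
      _ = Mr v * ω i := by field_simp
  have T1m : ∀ v, mr v ≤ mr (T v) := by
    intro v
    refine le_ciInf fun i => ?_
    rw [le_div_iff₀ (hω i)]
    have h1 : mr v * (lam * ω i) ≤ (A *ᵥ v) i := by
      rw [hmv, ← heig' i, hmv]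
      rw [Finset.mul_sum]
      refine Finset.sum_le_sum fun j _ => ?_
      calc mr v * (A i j * ω j) = A i j * (mr v * ω j) := by ring
        _ ≤ A i j * v j := mul_le_mul_of_nonneg_left (F1a v j) (hA i j)
    have h2 : T v i = lam⁻¹ * (A *ᵥ v) i := rfl
    rw [h2]
    calc mr v * ω i = lam⁻¹ * (mr v * (lam * ω i)) := by field_simp
      _ ≤ lam⁻¹ * (A *ᵥ v) i := mul_le_mul_of_nonneg_left h1 (inv_nonneg.mpr hlam.le)
  have T2 : ∀ v w, (∀ i, v i ≤ w i) → ∀ i, T v i ≤ T w i := by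
    intro v w h i
    have : (A *ᵥ v) i ≤ (A *ᵥ w) i := by
      rw [hmv, hmv]
      exact Finset.sum_le_sum fun j _ => mul_le_mul_of_nonneg_left (h j) (hA i j)
    exact mul_le_mul_of_nonneg_left this (inv_nonneg.mpr hlam.le)
  -- iterates
  have titer : ∀ (j : ℕ) (v : Fin d → ℝ), T^[j] v = (lam ^ j)⁻¹ • ((A ^ j) *ᵥ v) := by
    intro j
    induction j with
    | zero => intro v; simp
    | succ n ih =>
      intro v
      rw [Function.iterate_succ_apply, ih]
      show (lam ^ n)⁻¹ • ((A ^ n) *ᵥ (lam⁻¹ • (A *ᵥ v))) = _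
      rw [Matrix.mulVec_smul, Matrix.mulVec_mulVec, ← pow_succ, smul_smul, ← mul_inv, ← pow_succ]
  have poweig : ∀ (j : ℕ), (A ^ j) *ᵥ ω = (lam ^ j) • ω := by
    intro j
    induction j with
    | zero => simp
    | succ n ih =>
      rw [pow_succ, ← Matrix.mulVec_mulVec, heig, Matrix.mulVec_smul, ih, smul_smul, ← pow_succ']
  have hlamk : (0:ℝ) < lam ^ k := pow_pos hlam k
  -- the contraction constant
  set c₀ : ℝ := ⨅ p : Fin d × Fin d, (A ^ k) p.1 p.2 * ω p.2 / (lam ^ k * ω p.1) with hc₀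
  have hc₀pos : 0 < c₀ := by
    obtain ⟨p₀, hp₀⟩ := Finite.exists_min (fun p : Fin d × Fin d =>
      (A ^ k) p.1 p.2 * ω p.2 / (lam ^ k * ω p.1))
    have h1 : (A ^ k) p₀.1 p₀.2 * ω p₀.2 / (lam ^ k * ω p₀.1) ≤ c₀ := le_ciInf hp₀
    refine lt_of_lt_of_le ?_ h1
    exact div_pos (mul_pos (hAk _ _) (hω _)) (mul_pos hlamk (hω _))
  -- contraction inequality
  have T4 : ∀ v, mr v + c₀ * (Mr v - mr v) ≤ mr ((lam ^ k)⁻¹ • ((A ^ k) *ᵥ v)) := by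
    intro v
    obtain ⟨j₀, hj₀⟩ := Finite.exists_max (fun j => v j / ω j)
    have hMx : Mr v = v j₀ / ω j₀ :=
      le_antisymm (ciSup_le hj₀) (le_ciSup (f := fun j => v j / ω j)
        (Set.Finite.bddAbove (Set.finite_range _)) j₀)
    refine le_ciInf fun i => ?_
    rw [le_div_iff₀ (hω i)]
    have key : ∀ j, (A ^ k) i j * (mr v * ω j) ≤ (A ^ k) i j * v j :=
      fun j => mul_le_mul_of_nonneg_left (F1a v j) (hAk i j).le
    have hsum : ((A ^ k) *ᵥ v) i = ∑ j, (A ^ k) i j * v j := hmv _ _ _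
    have hωsum : ∑ j, (A ^ k) i j * ω j = lam ^ k * ω i := by
      have := congrFun (poweig k) i
      rw [hmv] at this
      simpa using this
    -- lower bound on the sum
    have hlow : mr v * (lam ^ k * ω i) + (A ^ k) i j₀ * (v j₀ - mr v * ω j₀)
        ≤ ((A ^ k) *ᵥ v) i := by
      rw [hsum, ← hωsum, Finset.mul_sum]
      have expand : ∀ j, (A ^ k) i j * v j
          = (A ^ k) i j * (mr v * ω j) + (A ^ k) i j * (v j - mr v * ω j) := by
        intro j; ring
      rw [Finset.sum_congr rfl fun j _ => expand j, Finset.sum_add_distrib]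
      have hterm : (A ^ k) i j₀ * (v j₀ - mr v * ω j₀)
          ≤ ∑ j, (A ^ k) i j * (v j - mr v * ω j) := by
        refine Finset.single_le_sum (f := fun j => (A ^ k) i j * (v j - mr v * ω j)) (fun j _ => ?_) (Finset.mem_univ j₀)
        exact mul_nonneg (hAk i j).le (sub_nonneg.mpr (F1a v j))
      have hms : ∀ j, mr v * ((A ^ k) i j * ω j) = (A ^ k) i j * (mr v * ω j) := fun j => by ring
      rw [Finset.sum_congr rfl fun j _ => hms j]
      exact add_le_add_right hterm _
    have hsmul : ((lam ^ k)⁻¹ • ((A ^ k) *ᵥ v)) i = (lam ^ k)⁻¹ * ((A ^ k) *ᵥ v) i := rfl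
    rw [hsmul]
    have hc₀le : c₀ ≤ (A ^ k) i j₀ * ω j₀ / (lam ^ k * ω i) :=
      ciInf_le (Set.Finite.bddBelow (Set.finite_range _)) (i, j₀)
    have hvj₀ : v j₀ - mr v * ω j₀ = (Mr v - mr v) * ω j₀ := by
      have : v j₀ = Mr v * ω j₀ := by
        rw [hMx, div_mul_cancel₀ _ (hω j₀).ne']
      rw [this]; ring
    have hosc : 0 ≤ Mr v - mr v := sub_nonneg.mpr (F2 v)
    have hstep : c₀ * (Mr v - mr v) * (lam ^ k * ω i) ≤ (A ^ k) i j₀ * (v j₀ - mr v * ω j₀) := by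
      rw [hvj₀]
      have h1 : c₀ * (lam ^ k * ω i) ≤ (A ^ k) i j₀ * ω j₀ := by
        rw [← le_div_iff₀ (mul_pos hlamk (hω i))]
        exact hc₀le
      calc c₀ * (Mr v - mr v) * (lam ^ k * ω i)
          = (c₀ * (lam ^ k * ω i)) * (Mr v - mr v) := by ring
        _ ≤ ((A ^ k) i j₀ * ω j₀) * (Mr v - mr v) := mul_le_mul_of_nonneg_right h1 hosc
        _ = (A ^ k) i j₀ * ((Mr v - mr v) * ω j₀) := by ring
    have := add_le_add_right hstep (mr v * (lam ^ k * ω i))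
    have hfinal := le_trans this hlow
    calc (mr v + c₀ * (Mr v - mr v)) * ω i
        = (lam ^ k)⁻¹ * (mr v * (lam ^ k * ω i) + c₀ * (Mr v - mr v) * (lam ^ k * ω i)) := by
          field_simp
      _ ≤ (lam ^ k)⁻¹ * ((A ^ k) *ᵥ v) i :=
          mul_le_mul_of_nonneg_left hfinal (inv_nonneg.mpr hlamk.le)
  -- the sequence analysis
  set δ : ℕ → ℝ := fun n => Mr (ε n) with hδdef
  have hδ0 : ∀ n, 0 ≤ δ n := by
    intro n
    obtain ⟨i⟩ := (inferInstance : Nonempty (Fin d))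
    exact le_trans (div_nonneg (hε n i) (hω i).le)
      (le_ciSup (f := fun i => ε n i / ω i) (Set.Finite.bddAbove (Set.finite_range _)) i)
  have hδsum : Summable δ := hδ
  set m : ℕ → ℝ := fun n => mr (z n) with hmdef
  set Mx : ℕ → ℝ := fun n => Mr (z n) with hMxdef
  have hm_mono : Monotone m := by
    refine monotone_nat_of_le_succ fun n => ?_
    show mr (z n) ≤ mr (z (n + 1))
    rw [hrec]
    exact le_trans (T1m (z n)) (F5 _ _ (hε n))
  have hMx_step : ∀ n, Mx (n + 1) ≤ Mx n + δ n := by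
    intro n
    show Mr (z (n + 1)) ≤ Mr (z n) + δ n
    rw [hrec]
    exact le_trans (F4 _ _) (add_le_add_left (T1M (z n)) _)
  set tail : ℕ → ℝ := fun n => ∑' j, δ (j + n) with htaildef
  have htail_rec : ∀ n, tail n = δ n + tail (n + 1) := by
    intro n
    have hs : Summable fun j => δ (j + n) := (summable_nat_add_iff n).mpr hδsum
    have := Summable.tsum_eq_zero_add hs
    simp only [zero_add] at this
    rw [htaildef]
    simp only []
    rw [this]
    congr 1
    exact tsum_congr fun j => by congr 1; omega
  have htail0 : ∀ n, 0 ≤ tail n :=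
    fun n => tsum_nonneg fun j => hδ0 _
  have htail_to0 : Tendsto tail atTop (nhds 0) := tendsto_sum_nat_add δ
  set M' : ℕ → ℝ := fun n => Mx n + tail n with hM'def
  have hM'anti : Antitone M' := by
    refine antitone_nat_of_succ_le fun n => ?_
    have h1 := hMx_step n
    have h2 := htail_rec n
    show Mx (n + 1) + tail (n + 1) ≤ Mx n + tail n
    linarith
  have hmleMx : ∀ n, m n ≤ Mx n := fun n => F2 _
  have hmleM' : ∀ n, m n ≤ M' n := fun n => le_trans (hmleMx n) (le_add_of_nonneg_right (htail0 n))
  have hm_bdd : BddAbove (Set.range m) := by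
    refine ⟨M' 0, ?_⟩
    rintro x ⟨n, rfl⟩
    exact le_trans (hmleM' n) (hM'anti (Nat.zero_le n))
  have hM'_bdd : BddBelow (Set.range M') := by
    refine ⟨m 0, ?_⟩
    rintro x ⟨n, rfl⟩
    exact le_trans (hm_mono (Nat.zero_le n)) (hmleM' n)
  set α : ℝ := ⨆ n, m n with hα
  set β : ℝ := ⨅ n, M' n with hβ
  have hmα : Tendsto m atTop (nhds α) := tendsto_atTop_ciSup hm_mono hm_bdd
  have hM'β : Tendsto M' atTop (nhds β) := tendsto_atTop_ciInf hM'anti hM'_bdd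
  have hMxβ : Tendsto Mx atTop (nhds β) := by
    have h := hM'β.sub htail_to0
    simp only [hM'def, sub_zero] at h
    simpa using h
  have hαβ : α ≤ β := le_of_tendsto_of_tendsto' hmα hMxβ hmleMx
  -- lower sandwich
  have hsand : ∀ n j i, T^[j] (z n) i ≤ z (n + j) i := by
    intro n j
    induction j with
    | zero => intro i; simp
    | succ jj ih =>
      intro i
      rw [Function.iterate_succ_apply']
      calc T (T^[jj] (z n)) i ≤ T (z (n + jj)) i := T2 _ _ ih i
        _ ≤ z (n + jj + 1) i := by
            rw [hrec]
            exact le_add_of_nonneg_right (hε _ i)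
  have hcontr : ∀ n, m n + c₀ * (Mx n - m n) ≤ m (n + k) := by
    intro n
    calc m n + c₀ * (Mx n - m n) ≤ mr ((lam ^ k)⁻¹ • ((A ^ k) *ᵥ z n)) := T4 _
      _ = mr (T^[k] (z n)) := by rw [titer]
      _ ≤ m (n + k) := F3m _ _ (hsand n k)
  have hβα : β ≤ α := by
    have h1 : Tendsto (fun n => m n + c₀ * (Mx n - m n)) atTop (nhds (α + c₀ * (β - α))) :=
      hmα.add ((hMxβ.sub hmα).const_mul c₀)
    have h2 : Tendsto (fun n => m (n + k)) atTop (nhds α) := hmα.comp (tendsto_add_atTop_nat k)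
    have h3 := le_of_tendsto_of_tendsto' h1 h2 hcontr
    nlinarith [hc₀pos]
  have hβeq : β = α := le_antisymm hβα hαβ
  refine ⟨α, le_ciSup hm_bdd 0, ?_⟩
  rw [tendsto_pi_nhds]
  intro i
  have h1 : Tendsto (fun n => m n * ω i) atTop (nhds (α * ω i)) := hmα.mul_const _
  have h2 : Tendsto (fun n => Mx n * ω i) atTop (nhds (α * ω i)) := by
    have := hMxβ.mul_const (ω i)
    rw [hβeq] at this
    exact this
  have goal : Tendsto (fun n => z n i) atTop (nhds (α * ω i)) :=
    tendsto_of_tendsto_of_tendsto_of_le_of_le h1 h2 (fun n => F1a _ i) (fun n => F1b _ i)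
  simpa using goal
open Matrix Filter

attribute [local instance] Matrix.linftyOpNormedRing Matrix.linftyOpNormedAlgebra

lemma Cdecay (e : ℕ) (C : Matrix (Fin e) (Fin e) ℝ) (lam : ℝ) (hlam : 0 < lam)
    (hC : ∀ μ : ℂ, (C.map (Complex.ofReal : ℝ → ℂ)).charpoly.IsRoot μ → ‖μ‖ < lam) :
    ∃ r : ℝ, 0 < r ∧ r < lam ∧ ∀ᶠ n in atTop, ∀ i j, |(C ^ n) i j| ≤ r ^ n := by
  haveI : CompleteSpace (Matrix (Fin e) (Fin e) ℂ) := FiniteDimensional.complete ℂ _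
  set Cc : Matrix (Fin e) (Fin e) ℂ := C.map (Complex.ofReal : ℝ → ℂ) with hCc
  -- the sup of |roots|
  set T : Finset ℝ := insert (0:ℝ) (Cc.charpoly.roots.toFinset.image (fun z : ℂ => ‖z‖)) with hTdef
  have hTne : T.Nonempty := ⟨0, Finset.mem_insert_self _ _⟩
  set r₀ : ℝ := T.max' hTne with hr₀def
  have hr₀lt : r₀ < lam := by
    refine Finset.max'_lt_iff T hTne |>.mpr fun y hy => ?_
    rcases Finset.mem_insert.mp hy with h | h
    · simpa [h] using hlam
    · obtain ⟨μ, hμ, rfl⟩ := Finset.mem_image.mp h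
      exact hC μ (Polynomial.isRoot_of_mem_roots (Multiset.mem_toFinset.mp hμ))
  have hr₀0 : 0 ≤ r₀ := Finset.le_max' T 0 (Finset.mem_insert_self _ _)
  have hroot_le : ∀ μ : ℂ, μ ∈ spectrum ℂ Cc → ‖μ‖ ≤ r₀ := by
    intro μ hμ
    -- spectrum member is a root of charpoly
    have hroot : Cc.charpoly.IsRoot μ := by
      rw [spectrum.mem_iff] at hμ
      by_contra hne
      apply hμ
      rw [Matrix.isUnit_iff_isUnit_det, isUnit_iff_ne_zero]
      intro hdet
      apply hne
      have : Polynomial.eval μ Cc.charpoly = 0 := by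
        rw [Matrix.charpoly, eval_det, Matrix.matPolyEquiv_charmatrix]
        rw [Polynomial.eval_sub, Polynomial.eval_X, Polynomial.eval_C]
        have : (Matrix.scalar (Fin e)) μ - Cc = (algebraMap ℂ (Matrix (Fin e) (Fin e) ℂ)) μ - Cc := by
          congr 1
        rw [this, hdet]
      exact this
    have hmem : ‖μ‖ ∈ T := by
      refine Finset.mem_insert_of_mem (Finset.mem_image.mpr ⟨μ, ?_, rfl⟩)
      rw [Multiset.mem_toFinset, Polynomial.mem_roots (Cc.charpoly_monic.ne_zero)]
      exact hroot
    exact Finset.le_max' T _ hmem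
  have hsr : spectralRadius ℂ Cc ≤ ENNReal.ofReal r₀ := by
    rw [spectralRadius]
    refine iSup₂_le fun μ hμ => ?_
    rw [← ENNReal.ofReal_coe_nnreal, coe_nnnorm]
    exact ENNReal.ofReal_le_ofReal (hroot_le μ hμ)
  set r : ℝ := (r₀ + lam) / 2 with hrdef
  have hr0 : 0 < r := by positivity
  have hrlam : r < lam := by rw [hrdef]; linarith
  have hr₀r : r₀ < r := by rw [hrdef]; linarith
  refine ⟨r, hr0, hrlam, ?_⟩
  have hgel := spectrum.pow_nnnorm_pow_one_div_tendsto_nhds_spectralRadius Cc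
  have hev : ∀ᶠ n : ℕ in atTop, ((‖Cc ^ n‖₊ : ENNReal) ^ (1 / (n:ℝ))) < ENNReal.ofReal r := by
    refine hgel.eventually_lt_const (lt_of_le_of_lt hsr ?_)
    exact ENNReal.ofReal_lt_ofReal_iff (lt_of_le_of_lt hr₀0 hr₀r) |>.mpr hr₀r
  filter_upwards [hev, eventually_ge_atTop 1] with n hn hn1 i j
  -- from root bound to norm bound
  have hnormlt : ‖Cc ^ n‖ < r ^ n := by
    have hne : (n:ℝ) ≠ 0 := Nat.cast_ne_zero.mpr (by omega)
    have h1 : ((‖Cc ^ n‖₊ : ENNReal) ^ (1 / (n:ℝ))) ^ (n:ℝ) < (ENNReal.ofReal r) ^ (n:ℝ) := by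
      apply ENNReal.rpow_lt_rpow hn (by positivity)
    rw [← ENNReal.rpow_mul, one_div, inv_mul_cancel₀ hne, ENNReal.rpow_one] at h1
    rw [ENNReal.rpow_natCast, ← ENNReal.ofReal_pow hr0.le] at h1
    rw [← ENNReal.ofReal_coe_nnreal, coe_nnnorm] at h1
    exact (ENNReal.ofReal_lt_ofReal_iff (by positivity)).mp h1
  -- entry bound
  have hentry : |(C ^ n) i j| ≤ ‖Cc ^ n‖ := by
    have hmap : Cc ^ n = (C ^ n).map (Complex.ofReal : ℝ → ℂ) := by
      rw [hCc]
      have : C.map (Complex.ofReal : ℝ → ℂ) = (Complex.ofRealHom : ℝ →+* ℂ).mapMatrix C := rfl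
      rw [this, ← map_pow]
      rfl
    have h1 : ‖(Cc ^ n) i j‖₊ ≤ ‖Cc ^ n‖₊ := by
      rw [Matrix.linfty_opNNNorm_def]
      refine le_trans ?_ (Finset.le_sup (Finset.mem_univ i))
      exact Finset.single_le_sum (f := fun j' => ‖(Cc ^ n) i j'‖₊) (fun _ _ => zero_le)
        (Finset.mem_univ j)
    have h2 : ‖(Cc ^ n) i j‖ = |(C ^ n) i j| := by
      rw [hmap]
      simp [Matrix.map_apply]
    rw [← h2]
    exact_mod_cast h1
  exact le_trans hentry hnormlt.le

theorem block_PF_convergence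
    (d e : ℕ) (hd : 0 < d) (he : 0 < e)
    (M : Matrix (Fin d ⊕ Fin e) (Fin d ⊕ Fin e) ℝ)
    (hMnonneg : ∀ i j, 0 ≤ M i j)
    (hblock : ∀ (i : Fin e) (j : Fin d), M (Sum.inr i) (Sum.inl j) = 0)
    (hprim : ∃ n : ℕ, ∀ i j : Fin d, 0 < ((M.submatrix Sum.inl Sum.inl) ^ n) i j)
    (lam : ℝ) (hlam : 0 < lam)
    (ωR : Fin d → ℝ) (hωRpos : ∀ i, 0 < ωR i) (hωRsum : ∑ i, ωR i = 1)
    (heig : (M.submatrix Sum.inl Sum.inl) *ᵥ ωR = lam • ωR)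
    (hC : ∀ μ : ℂ, ((M.submatrix Sum.inr Sum.inr).map (Complex.ofReal : ℝ → ℂ)).charpoly.IsRoot μ →
      ‖μ‖ < lam)
    (hpos : ∃ N : ℕ, ∀ n ≥ N, ∀ (i : Fin d) (j : Fin e), 0 < (M ^ n) (Sum.inl i) (Sum.inr j)) :
    (M *ᵥ (Sum.elim ωR fun _ => 0) = lam • (Sum.elim ωR fun _ => 0)) ∧
    (∀ v : Fin d ⊕ Fin e → ℝ, (∀ i, 0 ≤ v i) → v ≠ 0 →
      (∃ μ : ℝ, M *ᵥ v = μ • v) →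
      ∃ c : ℝ, 0 < c ∧ v = c • (Sum.elim ωR fun _ => 0)) ∧
    (∀ v : Fin d ⊕ Fin e → ℝ, (∀ i, 0 ≤ v i) → v ≠ 0 →
      Tendsto (fun n : ℕ => (∑ i, |((M ^ n) *ᵥ v) i|)⁻¹ • ((M ^ n) *ᵥ v)) atTop
        (nhds (Sum.elim ωR fun _ => 0))) := by
  haveI : Nonempty (Fin d) := ⟨⟨0, hd⟩⟩
  set A := M.submatrix Sum.inl Sum.inl with hAdef
  set B := M.submatrix Sum.inl Sum.inr with hBdef
  set C := M.submatrix Sum.inr Sum.inr with hCdef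
  obtain ⟨k, hk⟩ := hprim
  obtain ⟨N, hN⟩ := hpos
  have hAnn : ∀ i j, 0 ≤ A i j := fun i j => hMnonneg _ _
  have hBnn : ∀ i j, 0 ≤ B i j := fun i j => hMnonneg _ _
  have hCnn : ∀ i j, 0 ≤ C i j := fun i j => hMnonneg _ _
  have hmv : ∀ {κ₁ κ₂ : Type} [Fintype κ₂] (P : Matrix κ₁ κ₂ ℝ) (x : κ₂ → ℝ) (i : κ₁),
      (P *ᵥ x) i = ∑ j, P i j * x j := fun P x i => rfl
  -- block structure of mulVec
  have hMl : ∀ (x : Fin d ⊕ Fin e → ℝ) (i : Fin d),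
      (M *ᵥ x) (Sum.inl i) = (A *ᵥ (x ∘ Sum.inl)) i + (B *ᵥ (x ∘ Sum.inr)) i := by
    intro x i
    rw [hmv, hmv, hmv, Fintype.sum_sum_type]
    rfl
  have hMr' : ∀ (x : Fin d ⊕ Fin e → ℝ) (i : Fin e),
      (M *ᵥ x) (Sum.inr i) = (C *ᵥ (x ∘ Sum.inr)) i := by
    intro x i
    rw [hmv, hmv, Fintype.sum_sum_type]
    have h0 : ∑ j : Fin d, M (Sum.inr i) (Sum.inl j) * x (Sum.inl j) = 0 := by
      simp [hblock]
    rw [h0, zero_add]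
    rfl
  -- part 1
  have part1 : M *ᵥ (Sum.elim ωR fun _ => 0) = lam • (Sum.elim ωR fun _ => 0) := by
    funext s
    cases s with
    | inl i =>
      rw [hMl]
      have h2 : ((Sum.elim ωR (fun _ => (0:ℝ)) : Fin d ⊕ Fin e → ℝ) ∘ Sum.inr) = (0 : Fin e → ℝ) := by funext j; rfl
      have h1 : ((Sum.elim ωR (fun _ => (0:ℝ)) : Fin d ⊕ Fin e → ℝ) ∘ Sum.inl) = ωR := by funext j; rfl
      rw [h1, h2, Matrix.mulVec_zero, heig]
      simp
    | inr i =>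
      rw [hMr']
      have h2 : ((Sum.elim ωR (fun _ => (0:ℝ)) : Fin d ⊕ Fin e → ℝ) ∘ Sum.inr) = (0 : Fin e → ℝ) := by funext j; rfl
      rw [h2, Matrix.mulVec_zero]
      simp
  -- power facts
  have hMpnn : ∀ n (i j : Fin d ⊕ Fin e), 0 ≤ (M ^ n) i j := by
    intro n
    induction n with
    | zero =>
      intro i j
      by_cases h : i = j <;> simp [Matrix.one_apply, h]
    | succ n ih =>
      intro i j
      rw [pow_succ, Matrix.mul_apply]
      exact Finset.sum_nonneg fun l _ => mul_nonneg (ih i l) (hMnonneg l j)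
  have hzero : ∀ n (i : Fin e) (j : Fin d), (M ^ n) (Sum.inr i) (Sum.inl j) = 0 := by
    intro n
    induction n with
    | zero => intro i j; simp [Matrix.one_apply]
    | succ n ih =>
      intro i j
      rw [pow_succ', Matrix.mul_apply, Fintype.sum_sum_type]
      have h1 : ∑ l : Fin d, M (Sum.inr i) (Sum.inl l) * (M ^ n) (Sum.inl l) (Sum.inl j) = 0 := by
        simp [hblock]
      have h2 : ∑ l : Fin e, M (Sum.inr i) (Sum.inr l) * (M ^ n) (Sum.inr l) (Sum.inl j) = 0 := by
        refine Finset.sum_eq_zero fun l _ => ?_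
        rw [ih l j, mul_zero]
      rw [h1, h2, add_zero]
  have hApow : ∀ n (i j : Fin d), (M ^ n) (Sum.inl i) (Sum.inl j) = (A ^ n) i j := by
    intro n
    induction n with
    | zero => intro i j; by_cases h : i = j <;> simp [Matrix.one_apply, h, Sum.inl.injEq]
    | succ n ih =>
      intro i j
      rw [pow_succ', Matrix.mul_apply, Fintype.sum_sum_type, pow_succ', Matrix.mul_apply]
      have h2 : ∑ l : Fin e, M (Sum.inl i) (Sum.inr l) * (M ^ n) (Sum.inr l) (Sum.inl j) = 0 := by
        refine Finset.sum_eq_zero fun l _ => ?_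
        rw [hzero n l j, mul_zero]
      rw [h2, add_zero]
      exact Finset.sum_congr rfl fun l _ => by rw [ih l j]; rfl
  -- A has positive powers beyond k
  have hrowpos : ∀ i : Fin d, ∃ l, 0 < A i l := by
    intro i
    by_contra h
    push_neg at h
    have hz : ∀ l, A i l = 0 := fun l => le_antisymm (h l) (hAnn i l)
    have h1 : (A *ᵥ ωR) i = 0 := by
      rw [hmv]
      exact Finset.sum_eq_zero fun l _ => by rw [hz l, zero_mul]
    rw [heig] at h1
    have : lam * ωR i = 0 := h1
    nlinarith [hωRpos i, hlam]
  have hApos : ∀ n, k ≤ n → ∀ i j, 0 < (A ^ n) i j := by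
    intro n hn
    induction n, hn using Nat.le_induction with
    | base => exact hk
    | succ n hn ih =>
      intro i j
      rw [pow_succ', Matrix.mul_apply]
      obtain ⟨l₀, hl₀⟩ := hrowpos i
      refine Finset.sum_pos' (fun l _ => mul_nonneg (hAnn i l) (ih l j).le) ⟨l₀, Finset.mem_univ _, ?_⟩
      exact mul_pos hl₀ (ih l₀ j)
  -- scaling identities for the normalization
  have hscale : ∀ (t : ℝ), 0 < t → ∀ (v : Fin d ⊕ Fin e → ℝ),
      (∑ i, |(t • v) i|)⁻¹ • (t • v) = (∑ i, |v i|)⁻¹ • v := by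
    intro t ht v
    have h1 : ∑ i, |(t • v) i| = t * ∑ i, |v i| := by
      rw [Finset.mul_sum]
      exact Finset.sum_congr rfl fun i _ => by
        simp [abs_mul, abs_of_pos ht]
    rw [h1, mul_inv, smul_smul]
    congr 1
    rw [mul_comm t⁻¹, mul_assoc, inv_mul_cancel₀ ht.ne', mul_one]
  obtain ⟨r, hr0, hrlam, hev⟩ := Cdecay e C lam hlam hC
  -- main convergence engine
  have key : ∀ w : Fin d ⊕ Fin e → ℝ, (∀ i, 0 ≤ w i) → w ≠ 0 →
      ∃ γ : ℝ, 0 < γ ∧ Tendsto (fun n => (lam ^ n)⁻¹ • ((M ^ n) *ᵥ w)) atTop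
        (nhds (Sum.elim (γ • ωR) 0)) := by
    intro w hw hwne
    set n₀ : ℕ := max N k with hn₀
    set xw : ℕ → (Fin d ⊕ Fin e → ℝ) := fun n => (M ^ n) *ᵥ w with hxwdef
    have hxw_succ : ∀ n, xw (n + 1) = M *ᵥ xw n := by
      intro n
      show (M ^ (n+1)) *ᵥ w = M *ᵥ ((M ^ n) *ᵥ w)
      rw [Matrix.mulVec_mulVec, ← pow_succ']
    have hxwnn : ∀ n i, 0 ≤ xw n i := by
      intro n i
      rw [hxwdef]
      show (0:ℝ) ≤ ((M ^ n) *ᵥ w) i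
      rw [hmv]
      exact Finset.sum_nonneg fun l _ => mul_nonneg (hMpnn n i l) (hw l)
    have hxwr : ∀ n, xw n ∘ Sum.inr = (C ^ n) *ᵥ (w ∘ Sum.inr) := by
      intro n
      induction n with
      | zero => funext i; simp [hxwdef, Matrix.one_mulVec]
      | succ n ih =>
        funext i
        show (xw (n+1)) (Sum.inr i) = _
        rw [hxw_succ n, hMr', ih, Matrix.mulVec_mulVec, ← pow_succ']
    set u : Fin d ⊕ Fin e → ℝ := xw n₀ with hu
    set u1 : Fin d → ℝ := u ∘ Sum.inl with hu1
    set u2 : Fin e → ℝ := u ∘ Sum.inr with hu2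
    have hu1pos : ∀ i, 0 < u1 i := by
      intro i
      show 0 < xw n₀ (Sum.inl i)
      rw [hxwdef]
      show 0 < ((M ^ n₀) *ᵥ w) (Sum.inl i)
      rw [hmv]
      by_cases hw2 : w ∘ Sum.inr = 0
      · have hw1ne : w ∘ Sum.inl ≠ 0 := by
          intro hw1
          apply hwne
          funext s
          cases s with
          | inl a => exact congrFun hw1 a
          | inr a => exact congrFun hw2 a
        obtain ⟨j, hj⟩ := Function.ne_iff.mp hw1ne
        have hjpos : 0 < w (Sum.inl j) := lt_of_le_of_ne (hw _) (Ne.symm hj)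
        refine Finset.sum_pos' (fun l _ => mul_nonneg (hMpnn n₀ _ l) (hw l))
          ⟨Sum.inl j, Finset.mem_univ _, ?_⟩
        refine mul_pos ?_ hjpos
        rw [hApow]
        exact hApos n₀ (le_max_right N k) i j
      · obtain ⟨j, hj⟩ := Function.ne_iff.mp hw2
        have hjpos : 0 < w (Sum.inr j) := lt_of_le_of_ne (hw _) (Ne.symm hj)
        refine Finset.sum_pos' (fun l _ => mul_nonneg (hMpnn n₀ _ l) (hw l))
          ⟨Sum.inr j, Finset.mem_univ _, ?_⟩
        exact mul_pos (hN n₀ (le_max_left N k) i j) hjpos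
    have hcn : ∀ n, (C ^ n) *ᵥ u2 = xw (n + n₀) ∘ Sum.inr := by
      intro n
      rw [hxwr (n + n₀), hu2, hxwr n₀, Matrix.mulVec_mulVec, ← pow_add]
    have hcnn : ∀ n j, 0 ≤ ((C ^ n) *ᵥ u2) j := by
      intro n j
      rw [hcn]
      exact hxwnn _ _
    -- the perturbed linear recursion
    set z : ℕ → Fin d → ℝ := fun n => (lam ^ n)⁻¹ • (xw (n + n₀) ∘ Sum.inl) with hz
    set ε : ℕ → Fin d → ℝ := fun n => (lam ^ (n+1))⁻¹ • (B *ᵥ ((C ^ n) *ᵥ u2)) with hε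
    have hεnn : ∀ n i, 0 ≤ ε n i := by
      intro n i
      show 0 ≤ (lam ^ (n+1))⁻¹ * (B *ᵥ ((C ^ n) *ᵥ u2)) i
      refine mul_nonneg (by positivity) ?_
      rw [hmv]
      exact Finset.sum_nonneg fun l _ => mul_nonneg (hBnn i l) (hcnn n l)
    have hrec : ∀ n, z (n + 1) = lam⁻¹ • (A *ᵥ z n) + ε n := by
      intro n
      funext i
      have hidx : n + 1 + n₀ = (n + n₀) + 1 := by omega
      show (lam ^ (n+1))⁻¹ * xw (n + 1 + n₀) (Sum.inl i) = _
      rw [hidx, hxw_succ, hMl, ← hcn n]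
      have hAz : (A *ᵥ z n) i = (lam ^ n)⁻¹ * (A *ᵥ (xw (n + n₀) ∘ Sum.inl)) i := by
        rw [hz]
        simp only []
        rw [Matrix.mulVec_smul]
        rfl
      show (lam ^ (n+1))⁻¹ * ((A *ᵥ (xw (n + n₀) ∘ Sum.inl)) i + (B *ᵥ ((C ^ n) *ᵥ u2)) i)
        = lam⁻¹ * (A *ᵥ z n) i + (lam ^ (n+1))⁻¹ * (B *ᵥ ((C ^ n) *ᵥ u2)) i
      rw [hAz, pow_succ']
      field_simp
    -- summability of the perturbation sizes
    have hwmin : ∃ wm : ℝ, 0 < wm ∧ ∀ i, wm ≤ ωR i := by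
      obtain ⟨i₀, hi₀⟩ := Finite.exists_min ωR
      exact ⟨ωR i₀, hωRpos i₀, hi₀⟩
    obtain ⟨wm, hwm0, hwmle⟩ := hwmin
    set U : ℝ := ∑ l, u2 l with hU
    have hUnn : 0 ≤ U := Finset.sum_nonneg fun l _ => hxwnn _ _
    have hu2le : ∀ l, u2 l ≤ U :=
      fun l => Finset.single_le_sum (f := fun l => u2 l) (fun t _ => hxwnn _ _) (Finset.mem_univ l)
    set Kb : ℝ := ∑ i, ∑ l, B i l with hKb
    have hKbnn : 0 ≤ Kb := Finset.sum_nonneg fun i _ => Finset.sum_nonneg fun l _ => hBnn i l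
    have hBle : ∀ i l, B i l ≤ Kb := by
      intro i l
      refine le_trans (Finset.single_le_sum (f := fun l' => B i l') (fun t _ => hBnn i t)
        (Finset.mem_univ l)) ?_
      exact Finset.single_le_sum (f := fun i' => ∑ l', B i' l')
        (fun t _ => Finset.sum_nonneg fun l' _ => hBnn t l') (Finset.mem_univ i)
    set Kc : ℝ := ((e:ℝ) * Kb * U) / (lam * wm) with hKc
    have hgeo : Summable (fun n => Kc * (r / lam) ^ n) := by
      refine Summable.mul_left Kc (summable_geometric_of_lt_one (by positivity) ?_)
      rw [div_lt_one hlam]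
      exact hrlam
    have hδsum : Summable (fun n => ⨆ i, ε n i / ωR i) := by
      refine Summable.of_norm_bounded_eventually_nat hgeo ?_
      filter_upwards [hev] with n hn
      have hδnn : 0 ≤ ⨆ i, ε n i / ωR i := by
        obtain ⟨i⟩ := (inferInstance : Nonempty (Fin d))
        exact le_trans (div_nonneg (hεnn n i) (hωRpos i).le)
          (le_ciSup (f := fun i => ε n i / ωR i) (Set.Finite.bddAbove (Set.finite_range _)) i)
      rw [Real.norm_eq_abs, abs_of_nonneg hδnn]
      refine ciSup_le fun i => ?_
      -- bound the coordinates of ε n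
      have hcb : ∀ l, ((C ^ n) *ᵥ u2) l ≤ r ^ n * U := by
        intro l
        rw [hmv]
        calc ∑ t, (C ^ n) l t * u2 t ≤ ∑ t, r ^ n * u2 t := by
              refine Finset.sum_le_sum fun t _ => ?_
              refine mul_le_mul_of_nonneg_right ?_ (hxwnn _ _)
              exact le_trans (le_abs_self _) (hn l t)
          _ = r ^ n * U := by rw [← Finset.mul_sum]
      have hεb : ε n i ≤ (lam ^ (n+1))⁻¹ * ((e:ℝ) * Kb * (r ^ n * U)) := by
        show (lam ^ (n+1))⁻¹ * (B *ᵥ ((C ^ n) *ᵥ u2)) i ≤ _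
        refine mul_le_mul_of_nonneg_left ?_ (by positivity)
        rw [hmv]
        calc ∑ l, B i l * ((C ^ n) *ᵥ u2) l ≤ ∑ l : Fin e, Kb * (r ^ n * U) := by
              refine Finset.sum_le_sum fun l _ => ?_
              exact mul_le_mul (hBle i l) (hcb l) (hcnn n l) hKbnn
          _ = (e:ℝ) * (Kb * (r ^ n * U)) := by
              rw [Finset.sum_const]
              simp [Finset.card_univ]
          _ = (e:ℝ) * Kb * (r ^ n * U) := by ring
      calc ε n i / ωR i ≤ ε n i / wm := by
            exact div_le_div_of_nonneg_left (hεnn n i) hwm0 (hwmle i)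
        _ ≤ ((lam ^ (n+1))⁻¹ * ((e:ℝ) * Kb * (r ^ n * U))) / wm := by
            exact div_le_div_of_nonneg_right hεb hwm0.le
        _ = Kc * (r / lam) ^ n := by
            rw [hKc, div_pow]
            field_simp
            ring
    -- apply the Perron-Frobenius engine
    obtain ⟨α, hα1, hα2⟩ := PF_perturbed d hd A hAnn lam hlam ωR hωRpos heig k hk z ε hεnn hrec hδsum
    have hz0 : z 0 = u1 := by
      funext i
      show (lam ^ 0)⁻¹ * xw (0 + n₀) (Sum.inl i) = u1 i
      rw [pow_zero, inv_one, one_mul, zero_add]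
      rfl
    have hαpos : 0 < α := by
      refine lt_of_lt_of_le ?_ hα1
      obtain ⟨i₀, hi₀⟩ := Finite.exists_min (fun i => z 0 i / ωR i)
      refine lt_of_lt_of_le ?_ (le_ciInf hi₀)
      rw [hz0]
      exact div_pos (hu1pos i₀) (hωRpos i₀)
    set γ : ℝ := (lam ^ n₀)⁻¹ * α with hγ
    have hγpos : 0 < γ := mul_pos (by positivity) hαpos
    refine ⟨γ, hγpos, ?_⟩
    rw [tendsto_pi_nhds]
    intro s
    cases s with
    | inl i =>
      have hLval : Sum.elim (γ • ωR) (0 : Fin e → ℝ) (Sum.inl i) = (lam ^ n₀)⁻¹ * (α * ωR i) := by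
        simp [hγ, mul_assoc]
      rw [hLval]
      rw [← tendsto_add_atTop_iff_nat n₀]
      have heq : ∀ n, ((lam ^ (n + n₀))⁻¹ • ((M ^ (n + n₀)) *ᵥ w)) (Sum.inl i)
          = (lam ^ n₀)⁻¹ * z n i := by
        intro n
        show (lam ^ (n + n₀))⁻¹ * xw (n + n₀) (Sum.inl i) = (lam ^ n₀)⁻¹ * ((lam ^ n)⁻¹ * xw (n + n₀) (Sum.inl i))
        rw [pow_add, mul_inv]
        ring
      have hco : Tendsto (fun n => z n i) atTop (nhds (α * ωR i)) := by
        have := tendsto_pi_nhds.mp hα2 i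
        simpa using this
      refine Tendsto.congr (fun n => (heq n).symm) ?_
      exact hco.const_mul _
    | inr j =>
      have hLval : Sum.elim (γ • ωR) (0 : Fin e → ℝ) (Sum.inr j) = 0 := rfl
      rw [hLval]
      set W : ℝ := ∑ t, |w (Sum.inr t)| with hW
      have hWnn : 0 ≤ W := Finset.sum_nonneg fun t _ => abs_nonneg _
      have hbound : ∀ᶠ n in atTop, ‖((lam ^ n)⁻¹ • ((M ^ n) *ᵥ w)) (Sum.inr j)‖
          ≤ (r / lam) ^ n * W := by
        filter_upwards [hev] with n hn
        have h1 : xw n (Sum.inr j) = ((C ^ n) *ᵥ (w ∘ Sum.inr)) j := by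
          rw [← hxwr n]; rfl
        show ‖(lam ^ n)⁻¹ * xw n (Sum.inr j)‖ ≤ _
        rw [h1, Real.norm_eq_abs, abs_mul, abs_of_nonneg (a := (lam ^ n)⁻¹) (by positivity)]
        have h2 : |((C ^ n) *ᵥ (w ∘ Sum.inr)) j| ≤ r ^ n * W := by
          rw [hmv]
          refine le_trans (Finset.abs_sum_le_sum_abs _ _) ?_
          calc ∑ t, |(C ^ n) j t * w (Sum.inr t)| ≤ ∑ t, r ^ n * |w (Sum.inr t)| := by
                refine Finset.sum_le_sum fun t _ => ?_
                rw [abs_mul]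
                exact mul_le_mul_of_nonneg_right (hn j t) (abs_nonneg _)
            _ = r ^ n * W := by rw [← Finset.mul_sum]
        calc (lam ^ n)⁻¹ * |((C ^ n) *ᵥ (w ∘ Sum.inr)) j| ≤ (lam ^ n)⁻¹ * (r ^ n * W) := by
              exact mul_le_mul_of_nonneg_left h2 (by positivity)
          _ = (r / lam) ^ n * W := by
              rw [div_pow]
              field_simp
      refine squeeze_zero_norm' hbound ?_
      have : Tendsto (fun n => (r / lam) ^ n) atTop (nhds 0) := by
        refine tendsto_pow_atTop_nhds_zero_of_lt_one (by positivity) ?_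
        rw [div_lt_one hlam]; exact hrlam
      simpa using this.mul_const W
  -- normalized convergence (part 3)
  have part3 : ∀ v : Fin d ⊕ Fin e → ℝ, (∀ i, 0 ≤ v i) → v ≠ 0 →
      Tendsto (fun n : ℕ => (∑ i, |((M ^ n) *ᵥ v) i|)⁻¹ • ((M ^ n) *ᵥ v)) atTop
        (nhds (Sum.elim ωR fun _ => 0)) := by
    intro v hv hvne
    obtain ⟨γ, hγpos, hγt⟩ := key v hv hvne
    set L : Fin d ⊕ Fin e → ℝ := Sum.elim (γ • ωR) 0 with hL
    set y : ℕ → Fin d ⊕ Fin e → ℝ := fun n => (lam ^ n)⁻¹ • ((M ^ n) *ᵥ v) with hy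
    have hsumL : ∑ i, |L i| = γ := by
      rw [Fintype.sum_sum_type]
      have h1 : ∑ i : Fin d, |L (Sum.inl i)| = γ := by
        have : ∀ i : Fin d, |L (Sum.inl i)| = γ * ωR i := by
          intro i
          show |γ * ωR i| = γ * ωR i
          exact abs_of_nonneg (mul_nonneg hγpos.le (hωRpos i).le)
        rw [Finset.sum_congr rfl fun i _ => this i, ← Finset.mul_sum, hωRsum, mul_one]
      have h2 : ∑ i : Fin e, |L (Sum.inr i)| = 0 := by
        refine Finset.sum_eq_zero fun i _ => ?_
        show |(0:ℝ)| = 0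
        simp
      rw [h1, h2, add_zero]
    have hsumt : Tendsto (fun n => ∑ i, |y n i|) atTop (nhds γ) := by
      rw [← hsumL]
      refine tendsto_finset_sum _ fun i _ => ?_
      exact (tendsto_pi_nhds.mp hγt i).abs
    have hsmul : Tendsto (fun n => (∑ i, |y n i|)⁻¹ • y n) atTop (nhds (γ⁻¹ • L)) :=
      Tendsto.smul (hsumt.inv₀ hγpos.ne') hγt
    have hLfin : γ⁻¹ • L = Sum.elim ωR fun _ => 0 := by
      funext s
      cases s with
      | inl i =>
        show γ⁻¹ * (γ * ωR i) = ωR i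
        field_simp
      | inr i =>
        show γ⁻¹ * 0 = 0
        simp
    rw [hLfin] at hsmul
    refine Tendsto.congr (fun n => ?_) hsmul
    have hxy : (M ^ n) *ᵥ v = (lam ^ n) • y n := by
      rw [hy]
      simp only []
      rw [smul_smul, mul_inv_cancel₀ (by positivity : (lam:ℝ) ^ n ≠ 0), one_smul]
    rw [hxy]
    exact (hscale (lam ^ n) (by positivity) (y n)).symm
  -- uniqueness of the nonnegative eigenvector (part 2)
  have part2 : ∀ v : Fin d ⊕ Fin e → ℝ, (∀ i, 0 ≤ v i) → v ≠ 0 →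
      (∃ μ : ℝ, M *ᵥ v = μ • v) →
      ∃ c : ℝ, 0 < c ∧ v = c • (Sum.elim ωR fun _ => 0) := by
    intro v hv hvne ⟨μ, hμ⟩
    have hnorm := part3 v hv hvne
    have hiter : ∀ n, (M ^ n) *ᵥ v = (μ ^ n) • v := by
      intro n
      induction n with
      | zero => simp [Matrix.one_mulVec]
      | succ n ih =>
        rw [pow_succ', ← Matrix.mulVec_mulVec, ih, Matrix.mulVec_smul, hμ, smul_smul, ← pow_succ]
    obtain ⟨i₁, hi₁⟩ := Function.ne_iff.mp hvne
    have hi₁pos : 0 < v i₁ := lt_of_le_of_ne (hv _) (Ne.symm hi₁)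
    set s : ℝ := ∑ i, |v i| with hs
    have hspos : 0 < s :=
      Finset.sum_pos' (fun i _ => abs_nonneg _) ⟨i₁, Finset.mem_univ _, abs_pos.mpr hi₁⟩
    set i₀ : Fin d := ⟨0, hd⟩ with hi₀
    have hscaleneg : ∀ (t : ℝ), t < 0 → ∀ (x : Fin d ⊕ Fin e → ℝ),
        (∑ i, |(t • x) i|)⁻¹ • (t • x) = -((∑ i, |x i|)⁻¹ • x) := by
      intro t ht x
      have h1 : t • x = (-t) • (-x) := by rw [neg_smul, smul_neg, neg_neg]
      rw [h1, hscale (-t) (by linarith) (-x)]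
      have h2 : ∑ i, |(-x) i| = ∑ i, |x i| := by
        refine Finset.sum_congr rfl fun i _ => ?_
        show |(-x i)| = |x i|
        exact abs_neg _
      rw [h2, smul_neg]
    rcases lt_trichotomy μ 0 with hμneg | hμ0 | hμpos
    · -- μ < 0 : contradiction via even/odd subsequences
      exfalso
      have heven : Tendsto (fun q : ℕ => (fun n => (∑ i, |((M ^ n) *ᵥ v) i|)⁻¹ • ((M ^ n) *ᵥ v)) (2*q))
          atTop (nhds (Sum.elim ωR fun _ => 0)) :=
        hnorm.comp ((strictMono_mul_left_of_pos (by norm_num : (0:ℕ) < 2)).comp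
          strictMono_id).tendsto_atTop
      have hodd : Tendsto (fun q : ℕ => (fun n => (∑ i, |((M ^ n) *ᵥ v) i|)⁻¹ • ((M ^ n) *ᵥ v)) (2*q+1))
          atTop (nhds (Sum.elim ωR fun _ => 0)) :=
        hnorm.comp (StrictMono.tendsto_atTop (fun a b h => by omega))
      have hevenval : ∀ q : ℕ, (∑ i, |((M ^ (2*q)) *ᵥ v) i|)⁻¹ • ((M ^ (2*q)) *ᵥ v) = s⁻¹ • v := by
        intro q
        rw [hiter]
        have hp : 0 < μ ^ (2*q) := by
          rw [pow_mul]
          exact pow_pos (by nlinarith) q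
        exact hscale _ hp v
      have hoddval : ∀ q : ℕ, (∑ i, |((M ^ (2*q+1)) *ᵥ v) i|)⁻¹ • ((M ^ (2*q+1)) *ᵥ v)
          = -(s⁻¹ • v) := by
        intro q
        rw [hiter]
        have hp : μ ^ (2*q+1) < 0 := by
          rw [pow_succ, pow_mul]
          exact mul_neg_of_pos_of_neg (pow_pos (by nlinarith) q) hμneg
        exact hscaleneg _ hp v
      have he1 : s⁻¹ • v = Sum.elim ωR fun _ => 0 :=
        tendsto_nhds_unique tendsto_const_nhds (Tendsto.congr hevenval heven)
      have he2 : -(s⁻¹ • v) = Sum.elim ωR fun _ => 0 :=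
        tendsto_nhds_unique tendsto_const_nhds (Tendsto.congr hoddval hodd)
      have := congrFun he1 (Sum.inl i₀)
      have h2 := congrFun he2 (Sum.inl i₀)
      have hω₀ := hωRpos i₀
      simp only [Sum.elim_inl] at this h2
      rw [Pi.neg_apply] at h2
      rw [this] at h2
      linarith
    · -- μ = 0 : contradiction
      exfalso
      have h0 : ∀ᶠ n in atTop, (∑ i, |((M ^ n) *ᵥ v) i|)⁻¹ • ((M ^ n) *ᵥ v)
          = (0 : Fin d ⊕ Fin e → ℝ) := by
        filter_upwards [eventually_ge_atTop 1] with n hn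
        rw [hiter, hμ0, zero_pow (by omega : n ≠ 0), zero_smul]
        simp
      have hz : Tendsto (fun _ : ℕ => (0 : Fin d ⊕ Fin e → ℝ)) atTop
          (nhds (Sum.elim ωR fun _ => 0)) := Tendsto.congr' h0 hnorm
      have := tendsto_nhds_unique hz tendsto_const_nhds
      have h := congrFun this (Sum.inl i₀)
      simp only [Sum.elim_inl, Pi.zero_apply] at h
      exact (hωRpos i₀).ne' h
    · -- μ > 0
      have hconst : ∀ n : ℕ, (∑ i, |((M ^ n) *ᵥ v) i|)⁻¹ • ((M ^ n) *ᵥ v) = s⁻¹ • v := by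
        intro n
        rw [hiter]
        exact hscale _ (pow_pos hμpos n) v
      have he1 : s⁻¹ • v = Sum.elim ωR fun _ => 0 :=
        tendsto_nhds_unique tendsto_const_nhds (Tendsto.congr hconst hnorm)
      refine ⟨s, hspos, ?_⟩
      rw [← he1, smul_smul, mul_inv_cancel₀ hspos.ne', one_smul]
  exact ⟨part1, part2, part3⟩
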